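/- Let {X_t} be the active sets of a (1+ρ)-cobra walk on an undirected connected graph G started at source s. For any ρ' < ρ, there is a coupling producing sets {X'_t} with X'_t ⊆ X_t for all t, such that {X'_t} is distributed as the active sets of a (1+ρ')-cobra walk started at s. Consequently, the expected dissemination time of the (1+ρ)-cobra walk is a non-increasing function of ρ. -/

import Mathlib

open Finset

namespace CobraWalk

variable {V : Type} [Fintype V] [DecidableEq V]

/-- One round of a `(1+ρ)`-cobra walk, as seen from a single active node `u`
(branching probability `p`): with probability `p` the node branches, informing two
independently and uniformly sampled neighbors (with replacement); otherwise it
informs one uniformly sampled neighbor. -/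
noncomputable def nodeStep (G : SimpleGraph V) [DecidableRel G.Adj]
    (hdeg : ∀ u : V, (G.neighborFinset u).Nonempty)
    (p : ENNReal) (hp : p ≤ 1) (u : V) : PMF (Finset V) :=
  (PMF.ofFintype (fun b => cond b p (1 - p)) (by simp [add_tsub_cancel_of_le hp])).bind fun b =>
    if b then
      (PMF.uniformOfFinset _ (hdeg u)).bind fun v₁ =>
        (PMF.uniformOfFinset _ (hdeg u)).map fun v₂ => ({v₁, v₂} : Finset V)
    else (PMF.uniformOfFinset _ (hdeg u)).map fun v => ({v} : Finset V)

/-- Independent combination of the rounds of a list of active nodes: the next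
active set is the union of the sets of informed nodes. -/
noncomputable def listStep (step : V → PMF (Finset V)) : List V → PMF (Finset V)
  | [] => PMF.pure ∅
  | u :: l => (step u).bind fun s => (listStep step l).map fun s' => s ∪ s'

/-- The transition kernel of the active set of a `(1+ρ)`-cobra walk with branching
probability `p`: every active node acts independently and the new active set is
the set of all informed nodes. -/
noncomputable def cobraStep (G : SimpleGraph V) [DecidableRel G.Adj]
    (hdeg : ∀ u : V, (G.neighborFinset u).Nonempty)
    (p : ENNReal) (hp : p ≤ 1) (X : Finset V) : PMF (Finset V) :=
  listStep (nodeStep G hdeg p hp) X.toList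

/-- Transition kernel on states `(covered set, active set)`. -/
noncomputable def fullStep (G : SimpleGraph V) [DecidableRel G.Adj]
    (hdeg : ∀ u : V, (G.neighborFinset u).Nonempty)
    (p : ENNReal) (hp : p ≤ 1) (s : Finset V × Finset V) :
    PMF (Finset V × Finset V) :=
  (cobraStep G hdeg p hp s.2).map fun Y => (s.1 ∪ Y, Y)

/-- `notDone t s` is the probability that, starting from the state
`s = (covered, active)`, after `t` further rounds of the cobra walk not every node
has been covered, i.e. `Pr[T > t]` for the dissemination time `T`. -/
noncomputable def notDone (G : SimpleGraph V) [DecidableRel G.Adj]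
    (hdeg : ∀ u : V, (G.neighborFinset u).Nonempty)
    (p : ENNReal) (hp : p ≤ 1) : ℕ → Finset V × Finset V → ENNReal
  | 0, s => if s.1 = Finset.univ then 0 else 1
  | t + 1, s => ∑' s' : Finset V × Finset V,
      fullStep G hdeg p hp s s' * notDone G hdeg p hp t s'

section Aux

open scoped ENNReal

lemma tsum_map_mul {α β : Type*} (μ : PMF α) (f : α → β) (g : β → ℝ≥0∞) :
    ∑' b, (μ.map f) b * g b = ∑' a, μ a * g (f a) := by
  simp_rw [PMF.map_apply, ← ENNReal.tsum_mul_right]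
  rw [ENNReal.tsum_comm]
  refine tsum_congr fun a => ?_
  rw [tsum_eq_single (f a) (fun b hb => by rw [if_neg hb, zero_mul]), if_pos rfl]

lemma listStep_perm (step : V → PMF (Finset V)) {l l' : List V} (h : l.Perm l') :
    listStep step l = listStep step l' := by
  induction h with
  | nil => rfl
  | cons a h ih => simp only [listStep, ih]
  | swap a b l =>
      show ((step b).bind fun s =>
          ((step a).bind fun t => (listStep step l).map fun r => t ∪ r).map fun s' => s ∪ s')
        = ((step a).bind fun t =>
          ((step b).bind fun s => (listStep step l).map fun r => s ∪ r).map fun s' => t ∪ s')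
      simp only [PMF.map_bind, PMF.map_comp]
      rw [PMF.bind_comm]
      refine congrArg _ (funext fun x => congrArg _ (funext fun y => congrArg
        (fun f => PMF.map f (listStep step l)) (funext fun r => ?_)))
      show y ∪ (x ∪ r) = x ∪ (y ∪ r)
      exact Finset.union_left_comm y x r
  | trans h1 h2 ih1 ih2 => exact ih1.trans ih2

lemma toList_filter_perm (X' X : Finset V) (h : X' ⊆ X) :
    (X.toList.filter (· ∈ X')).Perm X'.toList := by
  refine (List.perm_ext_iff_of_nodup (X.nodup_toList.filter _) X'.nodup_toList).2 fun a => ?_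
  simp only [List.mem_filter, Finset.mem_toList, decide_eq_true_eq]
  exact ⟨fun ha => ha.2, fun ha => ⟨h ha, ha⟩⟩

/-- Weight function of the coupling of two Bernoulli random variables. -/
noncomputable def wBB (p q : ℝ≥0∞) : Bool × Bool → ℝ≥0∞
  | (true, true) => q
  | (true, false) => p - q
  | (false, true) => 0
  | (false, false) => 1 - p

lemma wBB_sum (p q : ℝ≥0∞) (hp : p ≤ 1) (hq : q ≤ p) :
    ∑ x : Bool × Bool, wBB p q x = 1 := by
  rw [Fintype.sum_prod_type]
  simp only [Fintype.sum_bool]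
  show wBB p q (true, true) + wBB p q (true, false)
      + (wBB p q (false, true) + wBB p q (false, false)) = 1
  show q + (p - q) + (0 + (1 - p)) = 1
  rw [zero_add, add_comm q (p - q), tsub_add_cancel_of_le hq, add_comm p (1 - p),
    tsub_add_cancel_of_le hp]

/-- Coupling of a `Bernoulli(p)` with a `Bernoulli(q)`, `q ≤ p`. -/
noncomputable def couplingBool (p q : ℝ≥0∞) (hp : p ≤ 1) (hq : q ≤ p) : PMF (Bool × Bool) :=
  PMF.ofFintype (wBB p q) (wBB_sum p q hp hq)

lemma couplingBool_fst (p q : ℝ≥0∞) (hp : p ≤ 1) (hq : q ≤ p) :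
    (couplingBool p q hp hq).map Prod.fst = PMF.ofFintype (fun b => cond b p (1 - p)) (by simp [add_tsub_cancel_of_le hp]) := by
  refine PMF.ext fun b => ?_
  rw [PMF.map_apply, tsum_fintype]
  cases b <;>
    simp [couplingBool, PMF.ofFintype_apply, wBB, Fintype.sum_prod_type,
      PMF.bernoulli_apply]
  rw [add_comm, tsub_add_cancel_of_le hq]

lemma couplingBool_snd (p q : ℝ≥0∞) (hp : p ≤ 1) (hq : q ≤ p) :
    (couplingBool p q hp hq).map Prod.snd = PMF.ofFintype (fun b => cond b q (1 - q)) (by simp [add_tsub_cancel_of_le (hq.trans hp)]) := by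
  refine PMF.ext fun b => ?_
  rw [PMF.map_apply, tsum_fintype]
  cases b <;>
    simp [couplingBool, PMF.ofFintype_apply, wBB, Fintype.sum_prod_type,
      PMF.bernoulli_apply]
  rw [add_comm]
  exact tsub_add_tsub_cancel hp hq

lemma couplingBool_support (p q : ℝ≥0∞) (hp : p ≤ 1) (hq : q ≤ p) :
    ∀ bb ∈ (couplingBool p q hp hq).support, bb.2 = true → bb.1 = true := by
  rintro ⟨b₁, b₂⟩ hbb h2
  subst h2
  cases b₁
  · exfalso
    apply PMF.mem_support_iff _ _ |>.1 hbb
    rfl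
  · rfl

/-- `branchSet b v₁ v₂` : informed set of a node (branching iff `b`). -/
def branchSet (b : Bool) (v₁ v₂ : V) : Finset V := if b then {v₁, v₂} else {v₁}

lemma branchSet_subset {b₁ b₂ : Bool} (h : b₂ = true → b₁ = true) (v₁ v₂ : V) :
    branchSet b₂ v₁ v₂ ⊆ branchSet b₁ v₁ v₂ := by
  cases b₂
  · cases b₁ <;> simp [branchSet, Finset.singleton_subset_iff]
  · rw [h rfl]

/-- The node-level coupling. -/
noncomputable def nodeCouple (G : SimpleGraph V) [DecidableRel G.Adj]
    (hdeg : ∀ u : V, (G.neighborFinset u).Nonempty)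
    (p q : ENNReal) (hp : p ≤ 1) (hq : q ≤ p) (u : V) : PMF (Finset V × Finset V) :=
  (couplingBool p q hp hq).bind fun bb =>
    (PMF.uniformOfFinset _ (hdeg u)).bind fun v₁ =>
      (PMF.uniformOfFinset _ (hdeg u)).map fun v₂ =>
        (branchSet bb.1 v₁ v₂, branchSet bb.2 v₁ v₂)

lemma nodeStep_eq (G : SimpleGraph V) [DecidableRel G.Adj]
    (hdeg : ∀ u : V, (G.neighborFinset u).Nonempty)
    (p : ENNReal) (hp : p ≤ 1) (u : V) :
    nodeStep G hdeg p hp u = (PMF.ofFintype (fun b => cond b p (1 - p)) (by simp [add_tsub_cancel_of_le hp])).bind fun b =>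
      (PMF.uniformOfFinset _ (hdeg u)).bind fun v₁ =>
        (PMF.uniformOfFinset _ (hdeg u)).map fun v₂ => branchSet b v₁ v₂ := by
  unfold nodeStep
  refine congrArg _ (funext fun b => ?_)
  cases b
  · show (PMF.uniformOfFinset _ (hdeg u)).map (fun v => ({v} : Finset V)) = _
    rw [show (fun v₁ => (PMF.uniformOfFinset _ (hdeg u)).map fun v₂ =>
          branchSet false v₁ v₂) = fun v₁ => PMF.pure ({v₁} : Finset V) from
        funext fun v₁ => PMF.map_const _ _]
    rfl
  · rfl

lemma nodeCouple_fst (G : SimpleGraph V) [DecidableRel G.Adj]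
    (hdeg : ∀ u : V, (G.neighborFinset u).Nonempty)
    (p q : ENNReal) (hp : p ≤ 1) (hq : q ≤ p) (u : V) :
    (nodeCouple G hdeg p q hp hq u).map Prod.fst = nodeStep G hdeg p hp u := by
  rw [nodeStep_eq, ← couplingBool_fst p q hp hq, PMF.bind_map]
  unfold nodeCouple
  simp only [PMF.map_bind, PMF.map_comp]
  rfl

lemma nodeCouple_snd (G : SimpleGraph V) [DecidableRel G.Adj]
    (hdeg : ∀ u : V, (G.neighborFinset u).Nonempty)
    (p q : ENNReal) (hp : p ≤ 1) (hq : q ≤ p) (u : V) :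
    (nodeCouple G hdeg p q hp hq u).map Prod.snd = nodeStep G hdeg q (hq.trans hp) u := by
  rw [nodeStep_eq, ← couplingBool_snd p q hp hq, PMF.bind_map]
  unfold nodeCouple
  simp only [PMF.map_bind, PMF.map_comp]
  rfl

lemma nodeCouple_support (G : SimpleGraph V) [DecidableRel G.Adj]
    (hdeg : ∀ u : V, (G.neighborFinset u).Nonempty)
    (p q : ENNReal) (hp : p ≤ 1) (hq : q ≤ p) (u : V) :
    ∀ y ∈ (nodeCouple G hdeg p q hp hq u).support, y.2 ⊆ y.1 := by
  intro y hy
  rw [nodeCouple, PMF.mem_support_bind_iff] at hy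
  obtain ⟨bb, hbb, hy⟩ := hy
  rw [PMF.mem_support_bind_iff] at hy
  obtain ⟨v₁, _, hy⟩ := hy
  rw [PMF.mem_support_map_iff] at hy
  obtain ⟨v₂, _, rfl⟩ := hy
  exact branchSet_subset (couplingBool_support p q hp hq bb hbb) v₁ v₂

lemma list_coupling (step step' : V → PMF (Finset V)) (S : Finset V)
    (c : V → PMF (Finset V × Finset V))
    (hfst : ∀ u, (c u).map Prod.fst = step u)
    (hsnd : ∀ u, (c u).map Prod.snd = if u ∈ S then step' u else PMF.pure ∅)
    (hsub : ∀ u, ∀ y ∈ (c u).support, y.2 ⊆ y.1) (l : List V) :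
    ∃ π : PMF (Finset V × Finset V),
      π.map Prod.fst = listStep step l ∧
      π.map Prod.snd = listStep step' (l.filter (· ∈ S)) ∧
      ∀ y ∈ π.support, y.2 ⊆ y.1 := by
  induction l with
  | nil =>
    refine ⟨PMF.pure (∅, ∅), ?_, ?_, ?_⟩
    · rw [PMF.pure_map]; rfl
    · rw [PMF.pure_map]; rfl
    · intro y hy
      rw [PMF.support_pure, Set.mem_singleton_iff] at hy
      subst hy; exact Finset.Subset.refl _
  | cons u l ih =>
    obtain ⟨π, h1, h2, h3⟩ := ih
    refine ⟨(c u).bind fun y => π.map fun z => (y.1 ∪ z.1, y.2 ∪ z.2), ?_, ?_, ?_⟩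
    · show _ = (step u).bind fun s => (listStep step l).map fun s' => s ∪ s'
      rw [← hfst u, PMF.bind_map, PMF.map_bind]
      refine congrArg _ (funext fun y => ?_)
      show (π.map fun z => (y.1 ∪ z.1, y.2 ∪ z.2)).map Prod.fst
          = (listStep step l).map fun s' => y.1 ∪ s'
      rw [PMF.map_comp, ← h1, PMF.map_comp]
      rfl
    · have key : ((c u).bind fun y => π.map fun z =>
            (y.1 ∪ z.1, y.2 ∪ z.2)).map Prod.snd
          = ((c u).map Prod.snd).bind fun s =>
            (listStep step' (l.filter (· ∈ S))).map fun s' => s ∪ s' := by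
        rw [PMF.bind_map, PMF.map_bind]
        refine congrArg _ (funext fun y => ?_)
        show (π.map fun z => (y.1 ∪ z.1, y.2 ∪ z.2)).map Prod.snd
            = (listStep step' (l.filter (· ∈ S))).map fun s' => y.2 ∪ s'
        rw [PMF.map_comp, ← h2, PMF.map_comp]
        rfl
      rw [key, hsnd u]
      by_cases hu : u ∈ S
      · rw [if_pos hu]
        have : (u :: l).filter (· ∈ S) = u :: l.filter (· ∈ S) := by
          simp [List.filter_cons, hu]
        rw [this]
        rfl
      · rw [if_neg hu, PMF.pure_bind]
        have : (u :: l).filter (· ∈ S) = l.filter (· ∈ S) := by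
          simp [List.filter_cons, hu]
        rw [this]
        simp only [Finset.empty_union]
        exact PMF.map_id _
    · intro y hy
      rw [PMF.mem_support_bind_iff] at hy
      obtain ⟨a, ha, hy⟩ := hy
      rw [PMF.mem_support_map_iff] at hy
      obtain ⟨z, hz, rfl⟩ := hy
      exact Finset.union_subset_union (hsub u a ha) (h3 z hz)

lemma cobra_coupling (G : SimpleGraph V) [DecidableRel G.Adj]
    (hdeg : ∀ u : V, (G.neighborFinset u).Nonempty)
    (p q : ENNReal) (hp : p ≤ 1) (hq : q ≤ p)
    (X' X : Finset V) (hX : X' ⊆ X) :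
    ∃ π : PMF (Finset V × Finset V),
      π.map Prod.fst = cobraStep G hdeg p hp X ∧
      π.map Prod.snd = cobraStep G hdeg q (hq.trans hp) X' ∧
      ∀ y ∈ π.support, y.2 ⊆ y.1 := by
  set c : V → PMF (Finset V × Finset V) := fun u =>
    if u ∈ X' then nodeCouple G hdeg p q hp hq u
    else (nodeStep G hdeg p hp u).map fun s => (s, (∅ : Finset V)) with hc
  have hfst : ∀ u, (c u).map Prod.fst = nodeStep G hdeg p hp u := by
    intro u
    by_cases hu : u ∈ X'
    · simp only [hc, if_pos hu, nodeCouple_fst]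
    · simp only [hc, if_neg hu]
      rw [PMF.map_comp]
      exact PMF.map_id _
  have hsnd : ∀ u, (c u).map Prod.snd
      = if u ∈ X' then nodeStep G hdeg q (hq.trans hp) u else PMF.pure ∅ := by
    intro u
    by_cases hu : u ∈ X'
    · simp only [hc, if_pos hu, nodeCouple_snd]
    · simp only [hc, if_neg hu]
      rw [PMF.map_comp]
      exact PMF.map_const _ _
  have hsub : ∀ u, ∀ y ∈ (c u).support, y.2 ⊆ y.1 := by
    intro u y hy
    by_cases hu : u ∈ X'
    · simp only [hc, if_pos hu] at hy
      exact nodeCouple_support G hdeg p q hp hq u y hy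
    · simp only [hc, if_neg hu] at hy
      rw [PMF.mem_support_map_iff] at hy
      obtain ⟨s, _, rfl⟩ := hy
      exact Finset.empty_subset _
  obtain ⟨π, h1, h2, h3⟩ := list_coupling (nodeStep G hdeg p hp)
    (nodeStep G hdeg q (hq.trans hp)) X' c hfst hsnd hsub X.toList
  refine ⟨π, h1, ?_, h3⟩
  rw [h2]
  exact listStep_perm _ (toList_filter_perm X' X hX)

lemma notDone_mono (G : SimpleGraph V) [DecidableRel G.Adj]
    (hdeg : ∀ u : V, (G.neighborFinset u).Nonempty)
    (p q : ENNReal) (hp : p ≤ 1) (hq : q ≤ p) :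
    ∀ (t : ℕ) (c a c' a' : Finset V), c' ⊆ c → a' ⊆ a →
      notDone G hdeg p hp t (c, a) ≤ notDone G hdeg q (hq.trans hp) t (c', a') := by
  intro t
  induction t with
  | zero =>
    intro c a c' a' hc _
    show (if c = Finset.univ then 0 else 1 : ENNReal)
        ≤ (if c' = Finset.univ then 0 else 1 : ENNReal)
    by_cases h : c' = Finset.univ
    · have hcu : c = Finset.univ := Finset.univ_subset_iff.1 (h ▸ hc)
      simp [h, hcu]
    · rw [if_neg h]
      split <;> simp
  | succ t ih =>
    intro c a c' a' hc ha
    obtain ⟨π, h1, h2, h3⟩ := cobra_coupling G hdeg p q hp hq a' a ha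
    show (∑' s', fullStep G hdeg p hp (c, a) s' * notDone G hdeg p hp t s')
        ≤ ∑' s', fullStep G hdeg q (hq.trans hp) (c', a') s'
            * notDone G hdeg q (hq.trans hp) t s'
    unfold fullStep
    rw [tsum_map_mul, tsum_map_mul]
    simp only
    rw [← h1, ← h2, tsum_map_mul, tsum_map_mul]
    refine ENNReal.tsum_le_tsum fun y => ?_
    by_cases hy : π y = 0
    · simp [hy]
    · have hsub := h3 y (PMF.mem_support_iff _ _ |>.2 hy)
      exact mul_le_mul_right
        (ih (c ∪ y.1) y.1 (c' ∪ y.2) y.2 (Finset.union_subset_union hc hsub) hsub) _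

end Aux

/-- Consider `(1+ρ)`- and `(1+ρ')`-cobra walks (branching
probabilities `p` and `q ≤ p`) on an undirected connected graph `G`, started at a
source `s`.  There is a coupling keeping the active set of the `(1+ρ')`-walk
inside that of the `(1+ρ)`-walk: for arbitrary active sets `X' ⊆ X` there is a
joint distribution whose marginals are the one-round transitions from `X`
(probability `p`) and from `X'` (probability `q`), supported on pairs `(Y, Y')`
with `Y' ⊆ Y` — which, iterated from `X'_0 = X_0 = {s}`, yields trajectories with
`X'_t ⊆ X_t` for all `t` and the correct laws.  Consequently the expected
dissemination time `E[T] = Σ_{t≥0} Pr[T > t]` is non-increasing in the branching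
probability. -/
theorem stmt_17 (G : SimpleGraph V) [DecidableRel G.Adj] (hG : G.Connected)
    (hdeg : ∀ u : V, (G.neighborFinset u).Nonempty)
    (p q : ENNReal) (hp : p ≤ 1) (hq : q ≤ p) (s : V) :
    (∀ X' X : Finset V, X' ⊆ X →
        ∃ π : PMF (Finset V × Finset V),
          π.map Prod.fst = cobraStep G hdeg p hp X ∧
          π.map Prod.snd = cobraStep G hdeg q (hq.trans hp) X' ∧
          ∀ y ∈ π.support, y.2 ⊆ y.1) ∧
    (∑' t : ℕ, notDone G hdeg p hp t ({s}, {s})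
        ≤ ∑' t : ℕ, notDone G hdeg q (hq.trans hp) t ({s}, {s})) := by
  refine ⟨fun X' X hX => cobra_coupling G hdeg p q hp hq X' X hX, ?_⟩
  exact ENNReal.tsum_le_tsum fun t =>
    notDone_mono G hdeg p q hp hq t {s} {s} {s} {s} (Finset.Subset.refl _) (Finset.Subset.refl _)

end CobraWalk
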